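/- Let 2 ≤ r < s be integers with s + 1 ≥ 2r. Then the minimum order n_bb(r,s;3) of a balanced biregular graph of girth 3 with degrees r and s equals 2(s − r + 1). -/

import Mathlib

open SimpleGraph Set

/-- The degree of a vertex, via the natural cardinality of its neighbor set. -/
noncomputable def deg {V : Type*} (G : SimpleGraph V) (v : V) : ℕ :=
  (G.neighborSet v).ncard

/-- Number of edges both of whose endpoints have degree `d`. -/
noncomputable def edgeCountDeg {V : Type*} (G : SimpleGraph V) (d : ℕ) : ℕ :=
  {e ∈ G.edgeSet | ∀ v ∈ e, deg G v = d}.ncard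

/-- An `(r,s;g)`-balanced biregular graph: girth `g`, degree set exactly `{r, s}`,
and equally many vertices of degree `r` as of degree `s`. -/
def IsBabi {V : Type*} (r s g : ℕ) (G : SimpleGraph V) : Prop :=
  G.girth = g ∧ (∀ v, deg G v = r ∨ deg G v = s) ∧
  (∃ v, deg G v = r) ∧ (∃ v, deg G v = s) ∧
  {v | deg G v = r}.ncard = {v | deg G v = s}.ncard

set_option linter.unusedSectionVars false

/-- bipartite adjacency condition: `u` (in A) connects to `v = k + (u + j) % k` for `j < r`. -/
def bipC (r k : ℕ) (u v : Fin (2*k)) : Prop := ∃ j, j < r ∧ v.val = k + (u.val + j) % k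

def myG (r k : ℕ) : SimpleGraph (Fin (2*k)) where
  Adj u v := u ≠ v ∧ ((k ≤ u.val ∧ k ≤ v.val) ∨ bipC r k u v ∨ bipC r k v u)
  symm := ⟨by rintro u v ⟨h1, h2⟩; exact ⟨h1.symm, by tauto⟩⟩
  loopless := ⟨fun v h => h.1 rfl⟩

lemma modlem (k u v : ℕ) (hv : v ≤ k) : ((u + v) % k + (k - v)) % k = u % k := by
  rw [Nat.mod_add_mod]
  rw [show u + v + (k - v) = u + k by omega, Nat.add_mod_right]

section
variable {r k : ℕ} (hr : 2 ≤ r) (hrk : r ≤ k)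
include hr hrk

lemma bipC_lt {u v : Fin (2*k)} (h : bipC r k u v) : k ≤ v.val := by
  obtain ⟨j, _, hj⟩ := h; omega

-- neighbor set of an A-vertex
lemma nbhdA (a : Fin (2*k)) (ha : a.val < k) :
    (myG r k).neighborSet a =
      (fun j : Fin r => (⟨k + (a.val + j.val) % k, by
        have := Nat.mod_lt (a.val + j.val) (show 0 < k by omega); omega⟩ : Fin (2*k))) '' Set.univ := by
  ext v
  simp only [SimpleGraph.mem_neighborSet, myG, Set.mem_image, Set.mem_univ, true_and]
  constructor
  · rintro ⟨hne, h | h | h⟩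
    · omega
    · obtain ⟨j, hjr, hj⟩ := h
      exact ⟨⟨j, hjr⟩, Fin.ext hj.symm⟩
    · exact absurd (bipC_lt hr hrk h) (by omega)
  · rintro ⟨j, rfl⟩
    have hmod : (a.val + j.val) % k < k := Nat.mod_lt _ (by omega)
    refine ⟨?_, Or.inr (Or.inl ⟨j.val, j.isLt, rfl⟩)⟩
    intro h
    have := congrArg Fin.val h
    simp only at this
    omega

end

section
variable {r k : ℕ} (hr : 2 ≤ r) (hrk : r ≤ k)
include hr hrk

lemma degA (a : Fin (2*k)) (ha : a.val < k) : deg (myG r k) a = r := by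
  rw [deg, nbhdA hr hrk a ha, Set.ncard_image_of_injective _ ?_, Set.ncard_univ,
    Nat.card_eq_fintype_card, Fintype.card_fin]
  intro j1 j2 h
  have h2 := congrArg Fin.val h
  simp only at h2
  have key : ∀ j : Fin r, ((a.val + j.val) % k + (k - a.val)) % k = j.val := by
    intro j
    rw [show a.val + j.val = j.val + a.val by omega, modlem k j.val a.val (by omega),
      Nat.mod_eq_of_lt (by omega)]
  have := key j1
  rw [show (a.val + j1.val) % k = (a.val + j2.val) % k by omega, key j2] at this
  exact Fin.ext this.symm

-- neighbor set of a B-vertex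
lemma nbhdB (b : Fin (2*k)) (hb : k ≤ b.val) :
    (myG r k).neighborSet b =
      ({v : Fin (2*k) | k ≤ v.val} \ {b}) ∪
      ((fun j : Fin r => (⟨(b.val - k + (k - j.val)) % k, by
        have := Nat.mod_lt (b.val - k + (k - j.val)) (show 0 < k by omega); omega⟩ : Fin (2*k))) '' Set.univ) := by
  have hblt : b.val - k < k := by omega
  ext v
  simp only [SimpleGraph.mem_neighborSet, myG, Set.mem_union, Set.mem_diff, Set.mem_singleton_iff,
    Set.mem_setOf_eq, Set.mem_image, Set.mem_univ, true_and]
  constructor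
  · rintro ⟨hne, h | h | h⟩
    · exact Or.inl ⟨h.2, hne.symm⟩
    · exact Or.inl ⟨bipC_lt hr hrk h, hne.symm⟩
    · -- v is an A-vertex: b.val = k + (v.val + j) % k
      obtain ⟨j, hjr, hj⟩ := h
      by_cases hvk : v.val < k
      · right
        refine ⟨⟨j, hjr⟩, Fin.ext ?_⟩
        simp only
        have h1 : b.val - k = (v.val + j) % k := by omega
        rw [h1, modlem k v.val j (by omega), Nat.mod_eq_of_lt hvk]
      · exact Or.inl ⟨by omega, hne.symm⟩
  · rintro (⟨hv, hne⟩ | ⟨j, rfl⟩)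
    · exact ⟨Ne.symm hne, Or.inl ⟨hb, hv⟩⟩
    · have hmod : (b.val - k + (k - j.val)) % k < k := Nat.mod_lt _ (by omega)
      refine ⟨?_, Or.inr (Or.inr ⟨j.val, j.isLt, ?_⟩)⟩
      · intro h
        have := congrArg Fin.val h
        simp only at this
        omega
      · simp only
        rw [Nat.mod_add_mod, show b.val - k + (k - j.val) + j.val = (b.val - k) + k by omega,
          Nat.add_mod_right, Nat.mod_eq_of_lt hblt]
        omega
end

lemma ncard_geSet {k : ℕ} (hk : 0 < k) : {v : Fin (2*k) | k ≤ v.val}.ncard = k := by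
  have : {v : Fin (2*k) | k ≤ v.val} =
      (fun j : Fin k => (⟨k + j.val, by omega⟩ : Fin (2*k))) '' Set.univ := by
    ext v
    simp only [Set.mem_setOf_eq, Set.mem_image, Set.mem_univ, true_and]
    constructor
    · intro hv
      exact ⟨⟨v.val - k, by omega⟩, Fin.ext (by simp; omega)⟩
    · rintro ⟨j, rfl⟩; simp
  rw [this, Set.ncard_image_of_injective _ (fun j1 j2 h => by
    have := congrArg Fin.val h; simp only at this; exact Fin.ext (by omega)),
    Set.ncard_univ, Nat.card_eq_fintype_card, Fintype.card_fin]

lemma ncard_ltSet {k : ℕ} : {v : Fin (2*k) | v.val < k}.ncard = k := by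
  rcases Nat.eq_zero_or_pos k with rfl | hk
  · simp [Set.ncard_eq_zero]
  have : {v : Fin (2*k) | v.val < k} =
      (fun j : Fin k => (⟨j.val, by omega⟩ : Fin (2*k))) '' Set.univ := by
    ext v
    simp only [Set.mem_setOf_eq, Set.mem_image, Set.mem_univ, true_and]
    constructor
    · intro hv
      exact ⟨⟨v.val, hv⟩, Fin.ext rfl⟩
    · rintro ⟨j, rfl⟩; exact j.isLt
  rw [this, Set.ncard_image_of_injective _ (fun j1 j2 h => by
    have := congrArg Fin.val h; simp only at this; exact Fin.ext this),
    Set.ncard_univ, Nat.card_eq_fintype_card, Fintype.card_fin]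

section
variable {r k : ℕ} (hr : 2 ≤ r) (hrk : r ≤ k)
include hr hrk

lemma degB (b : Fin (2*k)) (hb : k ≤ b.val) : deg (myG r k) b = k - 1 + r := by
  rw [deg, nbhdB hr hrk b hb, Set.ncard_union_eq ?_ (Set.toFinite _) (Set.toFinite _)]
  · congr 1
    · rw [Set.ncard_diff_singleton_of_mem (by exact hb), ncard_geSet (by omega)]
    · rw [Set.ncard_image_of_injective _ ?_, Set.ncard_univ, Nat.card_eq_fintype_card,
        Fintype.card_fin]
      intro j1 j2 h
      have h2 := congrArg Fin.val h
      simp only at h2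
      have key : ∀ j : Fin r, ((b.val - k + (k - j.val)) % k + j.val) % k = b.val - k := by
        intro j
        rw [Nat.mod_add_mod, show b.val - k + (k - j.val) + j.val = (b.val - k) + k by omega,
          Nat.add_mod_right, Nat.mod_eq_of_lt (by omega)]
      have e1 := key j1
      have e2 := key j2
      set a1 := (b.val - k + (k - j1.val)) % k with ha1
      have ha1k : a1 < k := Nat.mod_lt _ (by omega)
      -- recover j from a : j = ((a + j) % k + (k - a)) % k
      have rec1 : ∀ (a : ℕ) (j : Fin r), a < k → (a + j.val) % k = b.val - k →
          j.val = ((b.val - k) + (k - a)) % k := by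
        intro a j hak he
        rw [← he, show a + j.val = j.val + a by omega, modlem k j.val a (by omega),
          Nat.mod_eq_of_lt (by omega)]
      have r1 := rec1 a1 j1 ha1k e1
      have r2 := rec1 a1 j2 ha1k (by rw [h2]; exact e2)
      exact Fin.ext (by omega)
  · rw [Set.disjoint_left]
    rintro v ⟨hv, _⟩ ⟨j, _, rfl⟩
    have hv' : k ≤ (b.val - k + (k - j.val)) % k := hv
    have : (b.val - k + (k - j.val)) % k < k := Nat.mod_lt _ (by omega)
    omega
end

section
variable {r k : ℕ} (hr : 2 ≤ r) (hrk : r ≤ k)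
include hr hrk

lemma girth3 : (myG r k).girth = 3 := by
  have hk : 2 ≤ k := le_trans hr hrk
  set a0 : Fin (2*k) := ⟨0, by omega⟩
  set b0 : Fin (2*k) := ⟨k, by omega⟩
  set b1 : Fin (2*k) := ⟨k+1, by omega⟩
  have h1 : (myG r k).Adj a0 b0 := by
    refine ⟨by simp [a0, b0, Fin.ext_iff]; omega, Or.inr (Or.inl ⟨0, by omega, ?_⟩)⟩
    simp [a0, b0, Nat.mod_eq_of_lt (show 0 < k by omega)]
  have h2 : (myG r k).Adj b0 b1 := by
    exact ⟨by simp [b0, b1, Fin.ext_iff], Or.inl ⟨le_refl k, by simp [b1]⟩⟩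
  have h3 : (myG r k).Adj b1 a0 := by
    refine ⟨by simp [a0, b1, Fin.ext_iff], Or.inr (Or.inr ⟨1, by omega, ?_⟩)⟩
    simp [a0, b1, Nat.mod_eq_of_lt (show 1 < k by omega)]
  set w : (myG r k).Walk a0 a0 := .cons h1 (.cons h2 (.cons h3 .nil)) with hw
  have hne01 : a0 ≠ b0 := by simp [a0, b0, Fin.ext_iff]; omega
  have hne02 : a0 ≠ b1 := by simp [a0, b1, Fin.ext_iff]
  have hne12 : b0 ≠ b1 := by simp [b0, b1, Fin.ext_iff]
  have hcyc : w.IsCycle := by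
    rw [hw]
    simp [Walk.isCycle_def, Walk.isTrail_def, List.Nodup, Sym2.eq, Sym2.rel_iff]
    refine ⟨⟨?_, ?_⟩, ⟨hne12, hne01.symm⟩, hne02.symm⟩ <;> tauto
  have hnac : ¬ (myG r k).IsAcyclic := fun h => h w hcyc
  have hge : 3 ≤ (myG r k).girth := SimpleGraph.three_le_girth hnac
  have hle : (myG r k).egirth ≤ 3 := by
    have : (myG r k).egirth ≤ (w.length : ℕ∞) :=
      iInf_le_of_le a0 (iInf_le_of_le w (iInf_le _ hcyc))
    simpa [hw] using this
  have : (myG r k).girth ≤ 3 := by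
    have := ENat.toNat_le_toNat hle (by simp)
    simpa [SimpleGraph.girth] using this
  omega
end


open Classical in
lemma lower_bound (r s n : ℕ) (hrs : r < s) (G : SimpleGraph (Fin n))
    (hdeg : ∀ v, deg G v = r ∨ deg G v = s) (hex : ∃ v, deg G v = s)
    (hbal : {v | deg G v = r}.ncard = {v | deg G v = s}.ncard) :
    2 * (s - r + 1) ≤ n := by
  classical
  set A : Finset (Fin n) := Finset.univ.filter (fun v => deg G v = r) with hA
  set B : Finset (Fin n) := Finset.univ.filter (fun v => deg G v = s) with hB
  have hAc : {v | deg G v = r}.ncard = A.card := by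
    rw [hA]; rw [show {v | deg G v = r} = ↑(Finset.univ.filter (fun v => deg G v = r)) by ext v; simp]
    exact Set.ncard_coe_finset _
  have hBc : {v | deg G v = s}.ncard = B.card := by
    rw [hB]; rw [show {v | deg G v = s} = ↑(Finset.univ.filter (fun v => deg G v = s)) by ext v; simp]
    exact Set.ncard_coe_finset _
  have hcards : A.card = B.card := by rw [← hAc, ← hBc, hbal]
  -- degree as finset card
  have hdegcard : ∀ v, deg G v = (Finset.univ.filter (G.Adj v)).card := by
    intro v
    have : G.neighborSet v = ↑(Finset.univ.filter (G.Adj v)) := by ext u; simp [SimpleGraph.neighborSet]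
    rw [deg, this, Set.ncard_coe_finset]
  have hsplit : ∀ v, (A.filter (G.Adj v)).card + (B.filter (G.Adj v)).card = deg G v := by
    intro v
    rw [hdegcard v]
    rw [← Finset.card_union_of_disjoint]
    · congr 1
      rw [← Finset.filter_union]
      congr 1
      ext u; simp only [hA, hB, Finset.mem_union, Finset.mem_filter, Finset.mem_univ, true_and]
      rcases hdeg u with h | h <;> simp [h]
    · rw [Finset.disjoint_left]
      intro u hu hv
      simp only [hA, hB, Finset.mem_filter] at hu hv
      omega
  have hABdisj : Disjoint A B := by
    rw [Finset.disjoint_left]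
    intro u hu hv
    simp only [hA, hB, Finset.mem_filter] at hu hv
    omega
  have hABunion : A ∪ B = Finset.univ := by
    ext u
    simp only [hA, hB, Finset.mem_union, Finset.mem_filter, Finset.mem_univ, true_and, iff_true]
    exact hdeg u
  have hn : A.card + B.card = n := by
    rw [← Finset.card_union_of_disjoint hABdisj, hABunion, Finset.card_univ, Fintype.card_fin]
  -- double counting
  have hdouble : ∑ b ∈ B, (A.filter (G.Adj b)).card = ∑ a ∈ A, (B.filter (G.Adj a)).card := by
    simp only [Finset.card_filter]
    rw [Finset.sum_comm]
    refine Finset.sum_congr rfl fun a _ => Finset.sum_congr rfl fun b _ => ?_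
    simp [SimpleGraph.adj_comm]
  have hBpos : 1 ≤ B.card := by
    obtain ⟨v, hv⟩ := hex
    exact Finset.card_pos.mpr ⟨v, by simp [hB, hv]⟩
  -- per-vertex bounds
  have hbB : ∀ b ∈ B, s + 1 ≤ (A.filter (G.Adj b)).card + B.card := by
    intro b hb
    have hdb : deg G b = s := by simpa [hB] using hb
    have h1 : (B.filter (G.Adj b)).card ≤ B.card - 1 := by
      have hsub : B.filter (G.Adj b) ⊆ B.erase b := by
        intro u hu
        simp only [Finset.mem_filter] at hu
        exact Finset.mem_erase.mpr ⟨fun h => G.irrefl (h ▸ hu.2), hu.1⟩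
      calc (B.filter (G.Adj b)).card ≤ (B.erase b).card := Finset.card_le_card hsub
        _ = B.card - 1 := Finset.card_erase_of_mem hb
    have := hsplit b
    omega
  have haA : ∀ a ∈ A, (B.filter (G.Adj a)).card ≤ r := by
    intro a ha
    have hda : deg G a = r := by simpa [hA] using ha
    have := hsplit a
    omega
  have hsum : B.card * (s + 1) ≤ r * A.card + B.card * B.card := by
    calc B.card * (s + 1) = ∑ _b ∈ B, (s + 1) := by rw [Finset.sum_const, smul_eq_mul]
      _ ≤ ∑ b ∈ B, ((A.filter (G.Adj b)).card + B.card) := Finset.sum_le_sum hbB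
      _ = (∑ b ∈ B, (A.filter (G.Adj b)).card) + B.card * B.card := by
          rw [Finset.sum_add_distrib, Finset.sum_const, smul_eq_mul]
      _ = (∑ a ∈ A, (B.filter (G.Adj a)).card) + B.card * B.card := by rw [hdouble]
      _ ≤ (∑ _a ∈ A, r) + B.card * B.card :=
          Nat.add_le_add_right (Finset.sum_le_sum haA) _
      _ = r * A.card + B.card * B.card := by rw [Finset.sum_const, smul_eq_mul, mul_comm]
  have hkey : s + 1 ≤ r + B.card := by
    rw [hcards] at hsum
    have : B.card * (s + 1) ≤ B.card * (r + B.card) := by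
      calc B.card * (s+1) ≤ r * B.card + B.card * B.card := hsum
        _ = B.card * (r + B.card) := by ring
    exact Nat.le_of_mul_le_mul_left this hBpos
  omega


/-- `n_bb(r,s;3) = 2(s − r + 1)` when `s + 1 ≥ 2r`. -/
theorem stmt_11 (r s : ℕ) (hr : 2 ≤ r) (hrs : r < s) (h2r : 2 * r ≤ s + 1) :
    (∃ G : SimpleGraph (Fin (2 * (s - r + 1))), IsBabi r s 3 G) ∧
    (∀ (n : ℕ) (G : SimpleGraph (Fin n)), IsBabi r s 3 G → 2 * (s - r + 1) ≤ n) := by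
  constructor
  · set k := s - r + 1 with hk
    have hrk : r ≤ k := by omega
    refine ⟨myG r k, girth3 hr hrk, ?_, ?_, ?_, ?_⟩
    · intro v
      by_cases hv : v.val < k
      · exact Or.inl (degA hr hrk v hv)
      · right
        rw [degB hr hrk v (by omega)]
        omega
    · exact ⟨⟨0, by omega⟩, degA hr hrk _ (show (0:ℕ) < k by omega)⟩
    · refine ⟨⟨k, by omega⟩, ?_⟩
      rw [degB hr hrk _ (le_refl k)]
      omega
    · have e1 : {v : Fin (2*k) | deg (myG r k) v = r} = {v | v.val < k} := by
        ext v
        simp only [Set.mem_setOf_eq]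
        constructor
        · intro hv
          by_contra hc
          rw [degB hr hrk v (by omega)] at hv
          omega
        · intro hv; exact degA hr hrk v hv
      have e2 : {v : Fin (2*k) | deg (myG r k) v = s} = {v | k ≤ v.val} := by
        ext v
        simp only [Set.mem_setOf_eq]
        constructor
        · intro hv
          by_contra hc
          rw [degA hr hrk v (by omega)] at hv
          omega
        · intro hv
          rw [degB hr hrk v hv]
          omega
      rw [e1, e2, ncard_ltSet, ncard_geSet (by omega)]
  · intro n G hG
    exact lower_bound r s n hrs G hG.2.1 hG.2.2.2.1 hG.2.2.2.2
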